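/- arXiv:2504.02194 — 3 statements merged into one kernel-verified Lean document; each statement's English description precedes it below -/
import Mathlib

section
/- Let n > 3f, and for a transaction let committed_ois be a multiset of at least n − f ordering indicators of which at most f come from Byzantine replicas (the rest from correct replicas). Then the (f+1)-th smallest value of committed_ois is at least the minimum ordering indicator assigned by a correct replica and at most the maximum ordering indicator assigned by a correct replica. -/
theorem aoi_between_correct_min_max
    (n f : ℕ) (hnf : 3 * f < n)
    (B C : Multiset ℕ) (hB : Multiset.card B ≤ f)
    (hC : C ≠ 0)
    (hsize : n - f ≤ Multiset.card (B + C)) :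
    (∃ c ∈ C, c ≤ ((B + C).sort (· ≤ ·)).getD f 0) ∧
    (∃ c ∈ C, ((B + C).sort (· ≤ ·)).getD f 0 ≤ c) := by
  set l := (B + C).sort (· ≤ ·) with hl
  have hsort : l.Pairwise (· ≤ ·) := Multiset.pairwise_sort _ _
  have hcoe : (l : Multiset ℕ) = B + C := Multiset.sort_eq _ _
  have hlen : l.length = Multiset.card (B + C) := Multiset.length_sort _
  have hflt : f < l.length := by omega
  have hlen2 : 2 * f + 1 ≤ l.length := by omega
  set a := l.getD f 0 with ha
  have haf : a = l[f] := List.getD_eq_getElem l 0 hflt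
  -- part 1
  have key : ∀ (p : ℕ → Prop) [DecidablePred p],
      f + 1 ≤ Multiset.card ((B + C).filter p) →
      ∃ c ∈ C, p c := by
    intro p _ hcard
    rw [Multiset.filter_add] at hcard
    have hBc : Multiset.card (B.filter p) ≤ f :=
      le_trans (Multiset.card_le_card (Multiset.filter_le _ _)) hB
    rw [Multiset.card_add] at hcard
    have : 0 < Multiset.card (C.filter p) := by omega
    obtain ⟨c, hc⟩ := Multiset.card_pos_iff_exists_mem.mp this
    exact ⟨c, Multiset.mem_of_mem_filter hc, Multiset.of_mem_filter hc⟩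
  constructor
  · refine key (· ≤ a) ?_
    have hsub : (↑(l.take (f + 1)) : Multiset ℕ) ≤ (B + C).filter (· ≤ a) := by
      rw [Multiset.le_filter]
      constructor
      · rw [← hcoe]
        exact Multiset.coe_le.mpr (l.take_sublist _).subperm
      · intro x hx
        have hx' : x ∈ l.take (f + 1) := by simpa using hx
        obtain ⟨i, hi, rfl⟩ := List.mem_iff_getElem.mp hx'
        rw [List.getElem_take]
        have hif : i ≤ f := by
          have := hi
          simp [List.length_take] at this
          omega
        rw [haf]
        exact hsort.rel_get_of_le (a := ⟨i, by omega⟩) (b := ⟨f, hflt⟩) hif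
    have := Multiset.card_le_card hsub
    simpa [List.length_take, Nat.min_eq_left (by omega : f + 1 ≤ l.length)] using this
  · refine key (a ≤ ·) ?_
    have hsub : (↑(l.drop f) : Multiset ℕ) ≤ (B + C).filter (a ≤ ·) := by
      rw [Multiset.le_filter]
      constructor
      · rw [← hcoe]
        exact Multiset.coe_le.mpr (l.drop_sublist _).subperm
      · intro x hx
        have hx' : x ∈ l.drop f := by simpa using hx
        obtain ⟨i, hi, rfl⟩ := List.mem_iff_getElem.mp hx'
        rw [List.getElem_drop]
        rw [haf]
        have hfi : f ≤ f + i := Nat.le_add_right _ _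
        have hlt : f + i < l.length := by
          simp [List.length_drop] at hi; omega
        exact hsort.rel_get_of_le (a := ⟨f, hflt⟩) (b := ⟨f + i, hlt⟩) hfi
    have := Multiset.card_le_card hsub
    simp [List.length_drop] at this
    rw [Multiset.filter_add, Multiset.card_add]
    simp [Multiset.filter_add, Multiset.card_add] at this ⊢
    omega
end

section
/- (Ordering Linearizability of AOI assignment) Suppose n > 3f. For transactions T1 and T2, let AOI(T_i) be the (f+1)-th smallest element of a multiset of at least n − f ordering indicators, at most f of which are Byzantine and the rest lie in the set ois_i^C of correct indicators for T_i. If every element of ois_1^C is strictly smaller than every element of ois_2^C, then AOI(T1) < AOI(T2). -/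
/-- If a sorted list has at least `f+1` elements `≤ M`, then its `(f+1)`-th smallest is `≤ M`. -/
lemma aux_sorted_getD_le {l : List ℕ} (hs : l.Pairwise (· ≤ ·)) {f M : ℕ} (hf : f < l.length)
    (hc : f + 1 ≤ l.countP (fun x => decide (x ≤ M))) : l.getD f 0 ≤ M := by
  by_contra h
  push_neg at h
  rw [List.getD_eq_getElem _ _ hf] at h
  have hdrop : ∀ x ∈ l.drop f, ¬ (x ≤ M) := by
    intro x hx
    obtain ⟨i, hi, rfl⟩ := List.getElem_of_mem hx
    have hi' : f + i < l.length := by rw [List.length_drop] at hi; omega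
    have heq : (l.drop f)[i] = l[f + i]'hi' := List.getElem_drop
    rw [heq]
    have hle : l[f] ≤ l[f + i]'hi' :=
      hs.rel_get_of_le (a := ⟨f, hf⟩) (b := ⟨f + i, hi'⟩) (by simp [Fin.le_def])
    omega
  have hsplit : l.countP (fun x => decide (x ≤ M)) =
      (l.take f).countP (fun x => decide (x ≤ M)) +
      (l.drop f).countP (fun x => decide (x ≤ M)) := by
    conv_lhs => rw [← List.take_append_drop f l]
    rw [List.countP_append]
  have h0 : (l.drop f).countP (fun x => decide (x ≤ M)) = 0 := by
    rw [List.countP_eq_zero]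
    intro x hx
    simpa using hdrop x hx
  have h1 : (l.take f).countP (fun x => decide (x ≤ M)) ≤ f :=
    le_trans (List.countP_le_length) (by simp)
  omega

/-- If a sorted list has at most `f` elements `< m` and length `> f`,
then its `(f+1)`-th smallest is `≥ m`. -/
lemma aux_le_sorted_getD {l : List ℕ} (hs : l.Pairwise (· ≤ ·)) {f m : ℕ} (hf : f < l.length)
    (hc : l.countP (fun x => decide (x < m)) ≤ f) : m ≤ l.getD f 0 := by
  by_contra h
  push_neg at h
  rw [List.getD_eq_getElem _ _ hf] at h
  have htake : ∀ x ∈ l.take (f + 1), x < m := by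
    intro x hx
    obtain ⟨i, hi, rfl⟩ := List.getElem_of_mem hx
    have hi0 : i < f + 1 := by rw [List.length_take] at hi; omega
    have hi' : i < l.length := by omega
    have heq : (l.take (f + 1))[i] = l[i]'hi' := List.getElem_take
    rw [heq]
    have hle : l[i]'hi' ≤ l[f] :=
      hs.rel_get_of_le (a := ⟨i, hi'⟩) (b := ⟨f, hf⟩) (by simp [Fin.le_def]; omega)
    omega
  have hlen : (l.take (f + 1)).length = f + 1 := List.length_take_of_le (by omega)
  have hall : (l.take (f + 1)).countP (fun x => decide (x < m)) = f + 1 := by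
    rw [List.countP_eq_length.mpr (fun x hx => by simpa using htake x hx), hlen]
  have hsplit : l.countP (fun x => decide (x < m)) =
      (l.take (f + 1)).countP (fun x => decide (x < m)) +
      (l.drop (f + 1)).countP (fun x => decide (x < m)) := by
    conv_lhs => rw [← List.take_append_drop (f + 1) l]
    rw [List.countP_append]
  omega

theorem ordering_linearizability_aoi
    (n f : ℕ) (hnf : 3 * f < n)
    (ois1 ois2 : Finset ℕ) (h1 : ois1.Nonempty) (h2 : ois2.Nonempty)
    (S1 S2 : Multiset ℕ)
    (hS1size : n - f ≤ Multiset.card S1)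
    (hS2size : n - f ≤ Multiset.card S2)
    (hS1byz : Multiset.card (S1.filter (fun x => x ∉ ois1)) ≤ f)
    (hS2byz : Multiset.card (S2.filter (fun x => x ∉ ois2)) ≤ f)
    (hsep : ∀ a ∈ ois1, ∀ b ∈ ois2, a < b) :
    (S1.sort (· ≤ ·)).getD f 0 < (S2.sort (· ≤ ·)).getD f 0 := by
  set M := ois1.max' h1 with hM
  set m := ois2.min' h2 with hm
  have hMm : M < m := hsep _ (ois1.max'_mem h1) _ (ois2.min'_mem h2)
  set l1 := S1.sort (· ≤ ·) with hl1
  set l2 := S2.sort (· ≤ ·) with hl2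
  have hlen1 : l1.length = Multiset.card S1 := Multiset.length_sort _
  have hlen2 : l2.length = Multiset.card S2 := Multiset.length_sort _
  have hf1 : f < l1.length := by omega
  have hf2 : f < l2.length := by omega
  -- Claim 1: AOI(T1) ≤ M
  have hbyz1 : l1.countP (fun x => decide (¬ (x ≤ M))) ≤ f := by
    calc l1.countP (fun x => decide (¬ (x ≤ M)))
        ≤ l1.countP (fun x => decide (x ∉ ois1)) := by
          apply List.countP_mono_left
          intro x _ hx
          simp only [decide_eq_true_eq] at *
          intro hmem
          exact hx (ois1.le_max' x hmem)
      _ = Multiset.card (S1.filter (fun x => x ∉ ois1)) := by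
          rw [← Multiset.countP_eq_card_filter, ← Multiset.sort_eq S1 (· ≤ ·),
            Multiset.coe_countP]
      _ ≤ f := hS1byz
  have hcount1 : f + 1 ≤ l1.countP (fun x => decide (x ≤ M)) := by
    have := List.length_eq_countP_add_countP (fun x => decide (x ≤ M)) (l := l1)
    simp only [decide_eq_true_eq] at this hbyz1 ⊢
    omega
  have hA1 : l1.getD f 0 ≤ M := aux_sorted_getD_le (Multiset.pairwise_sort _ _) hf1 hcount1
  -- Claim 2: m ≤ AOI(T2)
  have hbyz2 : l2.countP (fun x => decide (x < m)) ≤ f := by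
    calc l2.countP (fun x => decide (x < m))
        ≤ l2.countP (fun x => decide (x ∉ ois2)) := by
          apply List.countP_mono_left
          intro x _ hx
          simp only [decide_eq_true_eq] at *
          intro hmem
          exact absurd (ois2.min'_le x hmem) (by omega)
      _ = Multiset.card (S2.filter (fun x => x ∉ ois2)) := by
          rw [← Multiset.countP_eq_card_filter, ← Multiset.sort_eq S2 (· ≤ ·),
            Multiset.coe_countP]
      _ ≤ f := hS2byz
  have hA2 : m ≤ l2.getD f 0 := aux_le_sorted_getD (Multiset.pairwise_sort _ _) hf2 hbyz2
  omega
end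

section
/- (Edge-direction majority under γ-agreement) Assume n > (2γ+1)f/(2γ−1) with 1/2 < γ ≤ 1, n − f correct replicas and f Byzantine replicas, where each replica casts at most one vote on the relative order of transactions T1, T2. If at least γ·(n−f) correct replicas vote T1-before-T2, then the number of T2-before-T1 votes (all f Byzantine votes plus all remaining correct votes) is strictly less than (n−f)/2. -/
theorem edge_direction_majority (n f c12 c21 b : ℕ) (γ : ℝ)
    (hγ1 : 1 / 2 < γ) (hγ2 : γ ≤ 1)
    (hn : (n : ℝ) > (2 * γ + 1) * f / (2 * γ - 1))
    (htot : (c12 : ℝ) + c21 ≤ (n : ℝ) - f)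
    (hc12 : γ * ((n : ℝ) - f) ≤ c12)
    (hb : b ≤ f) :
    (b : ℝ) + c21 < ((n : ℝ) - f) / 2 := by
  have h1 : (0:ℝ) < 2 * γ - 1 := by linarith
  have hn' : (2 * γ + 1) * f < (n:ℝ) * (2 * γ - 1) := by
    rwa [gt_iff_lt, div_lt_iff₀ h1] at hn
  have hb' : (b:ℝ) ≤ f := by exact_mod_cast hb
  nlinarith [htot, hc12, hb', hγ2, hn']
end
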